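/- Pansu derivative of the ceiling-cone defining functions at seam points: let a, b, α, β ∈ ℝⁿ with α⋅a + β⋅b = 1, let λ > 0, set p = (a, b, 1/λ²) ∈ H_{2n+1}(ℝ), and define G(x,y,z) = (α⋅x + β⋅y)² − λ² z, so that G(p) = 0. Then for every q = (x,y,z) ∈ H_{2n+1}(ℝ), lim_{t→0⁺} G(p·δ_t q)/t = (2α + (λ²/2) b)⋅x + (2β − (λ²/2) a)⋅y, and the value of this limit at q = p⁻¹ = (−a, −b, −1/λ²) equals −2. -/

import Mathlib

open Filter Metric Real

noncomputable section

/-- The higher Heisenberg group `H_{2n+1}(ℝ)` as `ℝⁿ × ℝⁿ × ℝ`. -/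
abbrev Heis (n : ℕ) := (Fin n → ℝ) × (Fin n → ℝ) × ℝ

/-- Standard inner product on `ℝⁿ`. -/
def dotR {n : ℕ} (x y : Fin n → ℝ) : ℝ := ∑ i, x i * y i

/-- Heisenberg group product. -/
def Hmul {n : ℕ} (p q : Heis n) : Heis n :=
  (p.1 + q.1, p.2.1 + q.2.1,
    p.2.2 + q.2.2 + (1 / 2) * (dotR p.1 q.2.1 - dotR q.1 p.2.1))

/-- Heisenberg dilations `δ_t(x,y,z) = (tx, ty, t²z)`. -/
def Hdil {n : ℕ} (t : ℝ) (p : Heis n) : Heis n :=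
  (t • p.1, t • p.2.1, t ^ 2 * p.2.2)

/-- The layered sup quasi-norm `max(N(x,y), λ√|z|)`. -/
def layeredNorm {n : ℕ} (N : (Fin n → ℝ) × (Fin n → ℝ) → ℝ) (lam : ℝ) (p : Heis n) : ℝ :=
  max (N (p.1, p.2.1)) (lam * Real.sqrt |p.2.2|)

/-- Ceiling-cone defining function `G(x,y,z) = (α⋅x + β⋅y)² − λ²z`. -/
def ceilG {n : ℕ} (α β : Fin n → ℝ) (lam : ℝ) (q : Heis n) : ℝ :=
  (dotR α q.1 + dotR β q.2.1) ^ 2 - lam ^ 2 * q.2.2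

lemma dotR_add_right {n : ℕ} (u v w : Fin n → ℝ) : dotR u (v + w) = dotR u v + dotR u w := by
  simp [dotR, mul_add, Finset.sum_add_distrib]

lemma dotR_smul_right {n : ℕ} (u v : Fin n → ℝ) (t : ℝ) : dotR u (t • v) = t * dotR u v := by
  simp [dotR, Finset.mul_sum]; exact Finset.sum_congr rfl fun i _ => by ring

lemma dotR_add_left {n : ℕ} (u v w : Fin n → ℝ) : dotR (u + v) w = dotR u w + dotR v w := by
  simp [dotR, add_mul, Finset.sum_add_distrib]

lemma dotR_sub_left {n : ℕ} (u v w : Fin n → ℝ) : dotR (u - v) w = dotR u w - dotR v w := by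
  simp [dotR, sub_mul, Finset.sum_sub_distrib]

lemma dotR_smul_left {n : ℕ} (u v : Fin n → ℝ) (t : ℝ) : dotR (t • u) v = t * dotR u v := by
  simp [dotR, Finset.mul_sum]; exact Finset.sum_congr rfl fun i _ => by ring

lemma dotR_neg_right {n : ℕ} (u v : Fin n → ℝ) : dotR u (-v) = -dotR u v := by
  simp [dotR]

lemma dotR_comm {n : ℕ} (u v : Fin n → ℝ) : dotR u v = dotR v u := by
  simp [dotR, mul_comm]

/-- **Pansu derivative of the ceiling-cone defining functions at seam points.** With
`α⋅a + β⋅b = 1` and `p = (a, b, 1/λ²)` (so `G(p) = 0`), for every `q = (x,y,z)` the limit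
`lim_{t→0⁺} G(p·δ_t q)/t` equals `(2α + (λ²/2)b)⋅x + (2β − (λ²/2)a)⋅y`, and its value at
`q = p⁻¹ = (−a, −b, −1/λ²)` is `−2`. -/
theorem pansu_ceiling_cone (n : ℕ) (a b α β : Fin n → ℝ)
    (hface : dotR α a + dotR β b = 1) (lam : ℝ) (hlam : 0 < lam) :
    (∀ x y : Fin n → ℝ, ∀ z : ℝ,
        Tendsto
          (fun t : ℝ => ceilG α β lam (Hmul (a, b, 1 / lam ^ 2) (Hdil t (x, y, z))) / t)
          (nhdsWithin 0 (Set.Ioi 0))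
          (nhds (dotR ((2 : ℝ) • α + (lam ^ 2 / 2) • b) x
            + dotR ((2 : ℝ) • β - (lam ^ 2 / 2) • a) y))) ∧
      dotR ((2 : ℝ) • α + (lam ^ 2 / 2) • b) (-a)
        + dotR ((2 : ℝ) • β - (lam ^ 2 / 2) • a) (-b) = -2 := by
  have key : ∀ x y : Fin n → ℝ, ∀ z : ℝ,
      Tendsto
        (fun t : ℝ => ceilG α β lam (Hmul (a, b, 1 / lam ^ 2) (Hdil t (x, y, z))) / t)
        (nhdsWithin 0 (Set.Ioi 0))
        (nhds (dotR ((2 : ℝ) • α + (lam ^ 2 / 2) • b) x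
          + dotR ((2 : ℝ) • β - (lam ^ 2 / 2) • a) y)) := by
    intro x y z
    set L : ℝ := dotR ((2 : ℝ) • α + (lam ^ 2 / 2) • b) x
          + dotR ((2 : ℝ) • β - (lam ^ 2 / 2) • a) y with hL
    set C : ℝ := (dotR α x + dotR β y) ^ 2 - lam ^ 2 * z with hC
    have heq : ∀ t ∈ Set.Ioi (0 : ℝ),
        ceilG α β lam (Hmul (a, b, 1 / lam ^ 2) (Hdil t (x, y, z))) / t = L + t * C := by
      intro t ht
      have ht' : (t : ℝ) ≠ 0 := ne_of_gt ht
      have hlam' : lam ≠ 0 := ne_of_gt hlam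
      simp only [ceilG, Hmul, Hdil, dotR_add_right, dotR_smul_right, dotR_smul_left, hL, hC,
        dotR_add_left, dotR_sub_left, dotR_comm x b, dotR_comm y a]
      field_simp
      linear_combination (2 * (dotR α a + dotR β b + 1)
        + 4 * t * (dotR α x + dotR β y)) * hface
    have htend : Tendsto (fun t : ℝ => L + t * C) (nhdsWithin 0 (Set.Ioi 0)) (nhds L) := by
      have : Tendsto (fun t : ℝ => L + t * C) (nhds 0) (nhds (L + 0 * C)) := by
        exact (tendsto_const_nhds.add ((continuous_id.mul continuous_const).tendsto 0))
      simpa using this.mono_left nhdsWithin_le_nhds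
    exact htend.congr' (by filter_upwards [self_mem_nhdsWithin] using fun t ht => (heq t ht).symm)
  refine ⟨key, ?_⟩
  simp only [dotR_neg_right, dotR_add_left, dotR_sub_left, dotR_smul_left, dotR_comm b a] at *
  nlinarith [hface]
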